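/- For every field F, every integer d ≥ 1, every π ∈ {1,2}^d and every a ∈ {0,1}^d, the restricted polynomial IMM_d|_{ρ_{π,a}} equals ∏_{i=1}^{m}(1 + y_i z_i) when |A| = 2m is even, and equals (∏_{i=1}^{m}(1 + y_i z_i))·(1 + y_{m+1}) when |A| = 2m+1 is odd. -/

import Mathlib

open MvPolynomial

/-- The variable set `X = {x^(i)_{u,v}}`: index `i ∈ Fin d`, entries `u,v ∈ Fin 2`
(value `0` of `Fin 2` represents `1`, value `1` represents `2`). -/
abbrev IMMVar (d : ℕ) : Type := Fin d × Fin 2 × Fin 2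

/-- The matrix `M^(i)` of variables. -/
noncomputable def IMMMat (F : Type) [CommSemiring F] (d : ℕ) (i : Fin d) :
    Matrix (Fin 2) (Fin 2) (MvPolynomial (IMMVar d) F) :=
  Matrix.of fun u v => X (i, u, v)

/-- The iterated matrix multiplication polynomial `IMM_d = M(1,1) + M(1,2)`,
where `M = M^(1) ⋯ M^(d)`. -/
noncomputable def IMMPoly (F : Type) [CommSemiring F] (d : ℕ) :
    MvPolynomial (IMMVar d) F :=
  (List.ofFn (IMMMat F d)).prod 0 0 + (List.ofFn (IMMMat F d)).prod 0 1

/-- `π(i−1)`, with the convention `π(0) = 1` (represented by `0 : Fin 2`). -/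
def prevOf {d : ℕ} (π : Fin d → Fin 2) (i : Fin d) : Fin 2 :=
  if _ : (i : ℕ) = 0 then 0 else π ⟨(i : ℕ) - 1, by have := i.isLt; omega⟩

/-- The number of indices `k ∈ A` (i.e. `a k = true`) with `k < i`; if `i ∈ A` is the
`j`-th smallest element of `A` (1-indexed), then `posIn a i = j − 1`. -/
def posIn {d : ℕ} (a : Fin d → Bool) (i : Fin d) : ℕ :=
  (Finset.univ.filter fun k => a k = true ∧ k < i).card

/-- `|A|` where `A = {i ∈ {1,…,d} : a_i = 1}`. -/
def cardA {d : ℕ} (a : Fin d → Bool) : ℕ :=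
  (Finset.univ.filter fun i => a i = true).card

/-- The restriction `ρ_{π,a}`, sending each variable `x^(i)_{u,v}` to a fresh
variable (`Sum.inl k` represents `y_{k+1}`, `Sum.inr k` represents `z_{k+1}`) or a
constant in `{0,1}`: if `i ∉ A`, the matrix `M^(i)` is set to the identity matrix when
`π(i−1) = π(i)` and to the flip permutation matrix otherwise; if `i` is the `j`-th
smallest element of `A` with `j` odd (i.e. `posIn a i` even), then
`x^(i)_{π(i−1),π(i)} ↦ y_{⌈j/2⌉}`, `x^(i)_{π(i−1),π(i)'} ↦ 1` and the rest to `0`;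
if `j` is even, then `x^(i)_{π(i−1),π(i)} ↦ z_{j/2}`, `x^(i)_{π(i−1)',π(i)} ↦ 1` and
the rest to `0`. The restricted polynomial `f|_ρ` is `MvPolynomial.aeval (rho F π a) f`. -/
noncomputable def rho (F : Type) [CommSemiring F] {d : ℕ} (π : Fin d → Fin 2)
    (a : Fin d → Bool) (x : IMMVar d) : MvPolynomial (ℕ ⊕ ℕ) F :=
  let i := x.1
  let u := x.2.1
  let v := x.2.2
  let p := prevOf π i
  if a i = true then
    if u = p ∧ v = π i then
      X (if posIn a i % 2 = 0 then Sum.inl (posIn a i / 2) else Sum.inr (posIn a i / 2))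
    else if posIn a i % 2 = 0 then
      (if u = p ∧ v ≠ π i then 1 else 0)
    else
      (if u ≠ p ∧ v = π i then 1 else 0)
  else
    if (u = v) ↔ (p = π i) then 1 else 0

/-- For every field `F`, every `d ≥ 1`, every `π ∈ {1,2}^d` and every
`a ∈ {0,1}^d`, the restricted polynomial `IMM_d|_{ρ_{π,a}}` equals
`∏_{i=1}^m (1 + y_i z_i)` when `|A| = 2m`, and
`(∏_{i=1}^m (1 + y_i z_i))·(1 + y_{m+1})` when `|A| = 2m+1`.
(Here `y_i` is `X (Sum.inl (i-1))` and `z_i` is `X (Sum.inr (i-1))`.) -/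
theorem stmt_8 (F : Type) [Field F] (d : ℕ) (hd : 1 ≤ d)
    (π : Fin d → Fin 2) (a : Fin d → Bool) (m : ℕ) :
    (cardA a = 2 * m →
      MvPolynomial.aeval (rho F π a) (IMMPoly F d) =
        ∏ j ∈ Finset.range m,
          (1 + (X (Sum.inl j) : MvPolynomial (ℕ ⊕ ℕ) F) * X (Sum.inr j))) ∧
    (cardA a = 2 * m + 1 →
      MvPolynomial.aeval (rho F π a) (IMMPoly F d) =
        (∏ j ∈ Finset.range m,
          (1 + (X (Sum.inl j) : MvPolynomial (ℕ ⊕ ℕ) F) * X (Sum.inr j))) *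
        (1 + X (Sum.inl m))) := by
  classical
  set f := rho F π a with hf
  set N : Fin d → Matrix (Fin 2) (Fin 2) (MvPolynomial (ℕ ⊕ ℕ) F) :=
    fun i => Matrix.of fun u v => f (i, u, v) with hNdef
  set c : ℕ → ℕ := fun n =>
    (Finset.univ.filter fun k : Fin d => a k = true ∧ (k : ℕ) < n).card with hcdef
  set pf : ℕ → Fin 2 := fun n =>
    if h : 0 < n ∧ n ≤ d then π ⟨n - 1, by omega⟩ else 0 with hpdef
  set Q : ℕ → MvPolynomial (ℕ ⊕ ℕ) F := fun t =>
    ∏ j ∈ Finset.range t, (1 + X (Sum.inl j) * X (Sum.inr j)) with hQdef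
  have hpos : ∀ (i : ℕ) (hi : i < d), posIn a ⟨i, hi⟩ = c i := by
    intro i hi
    unfold posIn
    simp only [hcdef]
    congr 1
  have hprev : ∀ (i : ℕ) (hi : i < d), prevOf π ⟨i, hi⟩ = pf i := by
    intro i hi
    unfold prevOf
    simp only [hpdef]
    by_cases h0 : i = 0
    · subst h0; simp
    · rw [dif_neg h0, dif_pos (show 0 < i ∧ i ≤ d by omega)]
  have hcstep : ∀ (i : ℕ) (hi : i < d),
      c (i + 1) = c i + (if a ⟨i, hi⟩ = true then 1 else 0) := by
    intro i hi
    have hsplit : (Finset.univ.filter fun k : Fin d => a k = true ∧ (k : ℕ) < i + 1)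
        = (Finset.univ.filter fun k : Fin d => a k = true ∧ (k : ℕ) < i) ∪
          (Finset.univ.filter fun k : Fin d => a k = true ∧ (k : ℕ) = i) := by
      ext k
      simp only [Finset.mem_filter, Finset.mem_union, Finset.mem_univ, true_and]
      constructor
      · rintro ⟨h1, h2⟩
        rcases Nat.lt_or_ge (k : ℕ) i with h | h
        · exact Or.inl ⟨h1, h⟩
        · exact Or.inr ⟨h1, by omega⟩
      · rintro (⟨h1, h2⟩ | ⟨h1, h2⟩) <;> exact ⟨h1, by omega⟩
    have hdisj : Disjoint
        (Finset.univ.filter fun k : Fin d => a k = true ∧ (k : ℕ) < i)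
        (Finset.univ.filter fun k : Fin d => a k = true ∧ (k : ℕ) = i) := by
      rw [Finset.disjoint_left]
      intro k hk1 hk2
      simp only [Finset.mem_filter, Finset.mem_univ, true_and] at hk1 hk2
      omega
    have hsing : (Finset.univ.filter fun k : Fin d => a k = true ∧ (k : ℕ) = i)
        = if a ⟨i, hi⟩ = true then {(⟨i, hi⟩ : Fin d)} else ∅ := by
      by_cases ha : a ⟨i, hi⟩ = true
      · rw [if_pos ha]
        ext k
        simp only [Finset.mem_filter, Finset.mem_univ, true_and, Finset.mem_singleton]
        constructor
        · rintro ⟨h1, h2⟩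
          exact Fin.ext h2
        · rintro rfl
          exact ⟨ha, rfl⟩
      · rw [if_neg ha]
        ext k
        simp only [Finset.mem_filter, Finset.mem_univ, true_and,
          Finset.notMem_empty, iff_false]
        rintro ⟨h1, h2⟩
        exact ha (by rwa [show (⟨i, hi⟩ : Fin d) = k from (Fin.ext h2.symm)])
    show (Finset.univ.filter fun k : Fin d => a k = true ∧ (k : ℕ) < i + 1).card = _
    rw [hsplit, Finset.card_union_of_disjoint hdisj, hsing]
    by_cases ha : a ⟨i, hi⟩ = true <;> simp [ha] <;> rfl
  have hpstep : ∀ (i : ℕ) (hi : i < d), pf (i + 1) = π ⟨i, hi⟩ := by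
    intro i hi
    simp only [hpdef]
    rw [dif_pos (show 0 < i + 1 ∧ i + 1 ≤ d by omega)]
    exact congrArg π (Fin.ext (by simp))
  have hQstep : ∀ t : ℕ, Q (t + 1) = Q t * (1 + X (Sum.inl t) * X (Sum.inr t)) := by
    intro t
    simp only [hQdef]
    exact Finset.prod_range_succ _ t
  -- main invariant
  have key : ∀ i, i ≤ d → ∀ v : Fin 2,
      ((List.ofFn N).take i).prod 0 v =
        if c i % 2 = 0 then (if v = pf i then Q (c i / 2) else 0)
        else Q (c i / 2) * (if v = pf i then X (Sum.inl (c i / 2)) else 1) := by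
    intro i
    induction i with
    | zero =>
      intro _ v
      have hc0 : c 0 = 0 := by simp [hcdef]
      have hp0 : pf 0 = 0 := by simp [hpdef]
      have hQ0 : Q 0 = 1 := by simp [hQdef]
      rw [hc0, hp0, hQ0]
      simp only [List.take_zero, List.prod_nil]
      rw [Matrix.one_apply]
      rcases (by omega : v = 0 ∨ v = 1) with hv | hv <;> simp [hv]
    | succ i ih =>
      intro hi v
      have hid : i < d := hi
      have hP : ((List.ofFn N).take (i + 1)).prod =
          ((List.ofFn N).take i).prod * N ⟨i, hid⟩ := by
        rw [List.prod_take_succ _ _ (by simpa using hid)]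
        congr 1
        simp
      rw [hP, Matrix.mul_apply, Fin.sum_univ_two,
        ih (le_of_lt hid) 0, ih (le_of_lt hid) 1]
      have hNe : ∀ u w : Fin 2, N ⟨i, hid⟩ u w = f (⟨i, hid⟩, u, w) := fun _ _ => rfl
      rw [hNe, hNe, hf]
      simp only [rho, hpos i hid, hprev i hid]
      rw [hcstep i hid, hpstep i hid]
      by_cases ha : a ⟨i, hid⟩ = true
      · by_cases hpar : c i % 2 = 0
        · -- y-matrix case: c goes even -> odd
          have h1 : (c i + 1) % 2 = 1 := by omega
          have h2 : (c i + 1) / 2 = c i / 2 := by omega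
          rcases (by omega : pf i = 0 ∨ pf i = 1) with hp | hp <;>
            rcases (by omega : π ⟨i, hid⟩ = 0 ∨ π ⟨i, hid⟩ = 1) with hq | hq <;>
            rcases (by omega : v = 0 ∨ v = 1) with hv | hv <;>
            simp [ha, hpar, h1, h2, hp, hq, hv] <;> ring
        · -- z-matrix case: c goes odd -> even
          have h1 : (c i + 1) % 2 = 0 := by omega
          have h2 : (c i + 1) / 2 = c i / 2 + 1 := by omega
          rcases (by omega : pf i = 0 ∨ pf i = 1) with hp | hp <;>
            rcases (by omega : π ⟨i, hid⟩ = 0 ∨ π ⟨i, hid⟩ = 1) with hq | hq <;>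
            rcases (by omega : v = 0 ∨ v = 1) with hv | hv <;>
            simp [ha, hpar, h1, h2, hQstep, hp, hq, hv] <;> ring
      · rcases (by omega : pf i = 0 ∨ pf i = 1) with hp | hp <;>
          rcases (by omega : π ⟨i, hid⟩ = 0 ∨ π ⟨i, hid⟩ = 1) with hq | hq <;>
          rcases (by omega : v = 0 ∨ v = 1) with hv | hv <;>
          by_cases hpar : c i % 2 = 0 <;>
          simp [ha, hp, hq, hv, hpar] <;> ring
  -- relate aeval of IMMPoly to the matrix product of N
  have htake : (List.ofFn N).take d = List.ofFn N := List.take_of_length_le (by simp)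
  have hmapmat : ((List.ofFn (IMMMat F d)).prod).map (aeval f) = (List.ofFn N).prod := by
    have h1 := map_list_prod ((aeval f : MvPolynomial (IMMVar d) F →ₐ[F]
        MvPolynomial (ℕ ⊕ ℕ) F).toRingHom.mapMatrix) (List.ofFn (IMMMat F d))
    rw [show ((List.ofFn (IMMMat F d)).prod).map (aeval f)
        = (List.map (⇑((aeval f : MvPolynomial (IMMVar d) F →ₐ[F]
            MvPolynomial (ℕ ⊕ ℕ) F).toRingHom.mapMatrix)) (List.ofFn (IMMMat F d))).prod
      from h1, List.map_ofFn]
    refine congrArg List.prod (congrArg List.ofFn ?_)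
    funext i
    ext u v
    simp [Function.comp, RingHom.mapMatrix_apply, IMMMat, Matrix.map_apply, hNdef, hf]
  have hIMM : aeval f (IMMPoly F d) =
      (List.ofFn N).prod 0 0 + (List.ofFn N).prod 0 1 := by
    simp only [IMMPoly, map_add]
    rw [← hmapmat]
    simp [Matrix.map_apply]
  have hcard : cardA a = c d := by
    unfold cardA
    simp only [hcdef]
    congr 1
    ext k
    simp [k.isLt]
  have hend : ∀ v : Fin 2, (List.ofFn N).prod 0 v =
      if c d % 2 = 0 then (if v = pf d then Q (c d / 2) else 0)
      else Q (c d / 2) * (if v = pf d then X (Sum.inl (c d / 2)) else 1) := by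
    intro v
    rw [← htake]
    exact key d le_rfl v
  constructor
  · intro hA
    have hc : c d = 2 * m := by rw [← hcard]; exact hA
    have h0 : c d % 2 = 0 := by omega
    have h2 : c d / 2 = m := by omega
    rw [hIMM, hend 0, hend 1, h0, if_pos rfl, if_pos rfl, h2]
    rcases (by omega : pf d = 0 ∨ pf d = 1) with hp | hp <;> simp [hp, hQdef]
  · intro hA
    have hc : c d = 2 * m + 1 := by rw [← hcard]; exact hA
    have h0 : ¬ (c d % 2 = 0) := by omega
    have h2 : c d / 2 = m := by omega
    rw [hIMM, hend 0, hend 1, if_neg h0, if_neg h0, h2]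
    rcases (by omega : pf d = 0 ∨ pf d = 1) with hp | hp <;>
      simp [hp, hQdef] <;> ring
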